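/- Abstract linear response: Let B_w ⊇ B_s ⊇ B_ss be Banach spaces of measures with ‖·‖_w ≤ ‖·‖_s ≤ ‖·‖_ss, and let L_ε (ε ≥ 0) be Markov operators with unique fixed points h_ε ∈ B_ss, L := L_0, h := h_0. Assume: (1) ‖L^k‖_{B_w→B_w} and ‖L_ε^k‖_{B_w→B_w} are bounded uniformly in k and ε; (2) ‖L_ε − L‖_{B_s→B_w} ≤ Cε; (3) there exist C_1 > 0, 0 < ρ < 1 with ‖L_ε^n‖_{V_s^0 → B_s} ≤ C_1 ρ^n for all ε ≥ 0, where V_s^0 = {v ∈ B_s : v(X) = 0}; (4) there is an operator L̂: B_ss → B_s with ‖ε^{-1}(L − L_ε)h − L̂h‖_s → 0 as ε → 0. Then, setting ĥ = (Id − L)^{-1} L̂ h (well defined since L̂h ∈ V_s^0), one has ‖ε^{-1}(h − h_ε) − ĥ‖_w → 0 as ε → 0. -/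

import Mathlib

open Filter

set_option maxHeartbeats 1000000

private lemma aux_iterate {X : Type*} [AddCommGroup X] [Module ℝ X]
    (T : Module.End ℝ X) (v g : X) (hv : v = T v + g) (n : ℕ) :
    v = (T ^ n) v + ∑ k ∈ Finset.range n, (T ^ k) g := by
  induction n with
  | zero => simp
  | succ n ih =>
    have hTn : (T ^ n) v = (T ^ (n + 1)) v + (T ^ n) g := by
      conv_lhs => rw [hv]
      rw [map_add, pow_succ, Module.End.mul_apply]
    rw [Finset.sum_range_succ]
    calc v = (T ^ n) v + ∑ k ∈ Finset.range n, (T ^ k) g := ih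
      _ = ((T ^ (n + 1)) v + (T ^ n) g) + ∑ k ∈ Finset.range n, (T ^ k) g := by rw [hTn]
      _ = (T ^ (n + 1)) v + (∑ k ∈ Finset.range n, (T ^ k) g + (T ^ n) g) := by abel

private lemma aux_seminorm_sum_le {X : Type*} [AddCommGroup X] [Module ℝ X]
    (p : Seminorm ℝ X) {ι : Type*} (s : Finset ι) (f : ι → X) :
    p (∑ i ∈ s, f i) ≤ ∑ i ∈ s, p (f i) := by
  classical
  induction s using Finset.induction with
  | empty => simp
  | insert a s hnot ih =>
    rw [Finset.sum_insert hnot, Finset.sum_insert hnot]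
    exact (map_add_le_add p _ _).trans (by linarith)

private lemma aux_tele {X : Type*} [AddCommGroup X] [Module ℝ X]
    (nw ns : Seminorm ℝ X) (S T : Module.End ℝ X) (K' c : ℝ) (hK : 0 ≤ K')
    (hT : ∀ k : ℕ, ∀ x, nw ((T ^ k) x) ≤ K' * nw x)
    (hST : ∀ x, nw (S x - T x) ≤ c * ns x) :
    ∀ (k : ℕ) (x : X),
      nw ((S ^ k) x - (T ^ k) x) ≤ K' * c * ∑ j ∈ Finset.range k, ns ((S ^ j) x) := by
  intro k
  induction k with
  | zero => intro x; simp
  | succ k ih =>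
    intro x
    have hdecomp : (S ^ (k + 1)) x - (T ^ (k + 1)) x
        = ((S ^ k) (S x) - (T ^ k) (S x)) + (T ^ k) (S x - T x) := by
      rw [map_sub, pow_succ, pow_succ, Module.End.mul_apply, Module.End.mul_apply]
      abel
    have hpow : ∀ j : ℕ, (S ^ (j + 1)) x = (S ^ j) (S x) := fun j => by
      rw [pow_succ, Module.End.mul_apply]
    have step2 : nw ((T ^ k) (S x - T x)) ≤ K' * (c * ns x) := by
      refine (hT k _).trans ?_
      have := hST x
      nlinarith [apply_nonneg nw (S x - T x)]
    calc nw ((S ^ (k + 1)) x - (T ^ (k + 1)) x)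
        ≤ nw ((S ^ k) (S x) - (T ^ k) (S x)) + nw ((T ^ k) (S x - T x)) := by
          rw [hdecomp]; exact map_add_le_add nw _ _
      _ ≤ K' * c * ∑ j ∈ Finset.range k, ns ((S ^ j) (S x)) + K' * (c * ns x) :=
          add_le_add (ih (S x)) step2
      _ = K' * c * ∑ j ∈ Finset.range (k + 1), ns ((S ^ j) x) := by
          rw [Finset.sum_range_succ']
          simp only [hpow, pow_zero, Module.End.one_apply]
          ring

/-- abstract linear response.  `X` is a space of (signed) measures
carrying three norms `nw ≤ ns ≤ nss`, `mass v` plays the role of `v(X)`, and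
`L ε` is a family of Markov operators with unique fixed points `h ε` of mass one.
Under (1) uniform weak boundedness of the powers, (2) `‖L_ε - L‖_{s→w} ≤ Cε`,
(3) uniform contraction of the powers on the zero-mass space `V_s⁰`, and
(4) existence of a derivative operator `L̂` with `ε⁻¹(L - L_ε)h → L̂h` in `ns`,
the element `ĥ = (Id - L)⁻¹ L̂ h` (characterised by `ĥ - Lĥ = L̂h`, `mass ĥ = 0`)
satisfies `‖ε⁻¹(h - h_ε) - ĥ‖_w → 0` as `ε → 0⁺`. -/
theorem stmt6
    {X : Type*} [AddCommGroup X] [Module ℝ X]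
    (nw ns nss : Seminorm ℝ X)
    (hws : ∀ x, nw x ≤ ns x) (hsss : ∀ x, ns x ≤ nss x)
    (mass : X →ₗ[ℝ] ℝ)
    (L : ℝ → Module.End ℝ X)
    (h : ℝ → X)
    (hmarkov : ∀ ε ≥ (0:ℝ), ∀ x, mass (L ε x) = mass x)
    (hfix : ∀ ε ≥ (0:ℝ), L ε (h ε) = h ε ∧ mass (h ε) = 1)
    (huniq : ∀ ε ≥ (0:ℝ), ∀ y, L ε y = y → mass y = 1 → y = h ε)
    (K : ℝ) (h1 : ∀ ε ≥ (0:ℝ), ∀ k : ℕ, ∀ x, nw ((L ε ^ k) x) ≤ K * nw x)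
    (C : ℝ) (h2 : ∀ ε > (0:ℝ), ∀ x, nw (L ε x - L 0 x) ≤ C * ε * ns x)
    (C1 ρ : ℝ) (hC1 : 0 < C1) (hρ0 : 0 < ρ) (hρ1 : ρ < 1)
    (h3 : ∀ ε ≥ (0:ℝ), ∀ n : ℕ, ∀ v, mass v = 0 → ns ((L ε ^ n) v) ≤ C1 * ρ ^ n * ns v)
    (Lhat : X →ₗ[ℝ] X)
    (h4 : Tendsto (fun ε : ℝ => ns (ε⁻¹ • (L 0 (h 0) - L ε (h 0)) - Lhat (h 0)))
      (nhdsWithin 0 (Set.Ioi 0)) (nhds 0))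
    (hhat : X)
    (hhat_def : hhat - L 0 hhat = Lhat (h 0)) (hhat0 : mass hhat = 0) :
    Tendsto (fun ε : ℝ => nw (ε⁻¹ • (h 0 - h ε) - hhat))
      (nhdsWithin 0 (Set.Ioi 0)) (nhds 0) := by
  classical
  have h00 : L 0 (h 0) = h 0 := (hfix 0 le_rfl).1
  have hmass0 : mass (h 0) = 1 := (hfix 0 le_rfl).2
  have hmassg : mass (Lhat (h 0)) = 0 := by
    rw [← hhat_def, map_sub, hmarkov 0 le_rfl hhat, sub_self]
  have hρ' : (0:ℝ) < 1 - ρ := by linarith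
  set K' := max K 1 with hK'def
  have hK'0 : (0:ℝ) ≤ K' := le_trans zero_le_one (le_max_right _ _)
  have h1' : ∀ ε ≥ (0:ℝ), ∀ k : ℕ, ∀ x, nw ((L ε ^ k) x) ≤ K' * nw x := fun ε hε k x =>
    (h1 ε hε k x).trans (mul_le_mul_of_nonneg_right (le_max_left _ _) (apply_nonneg nw x))
  set C' := max C 0 with hC'def
  have hC'0 : (0:ℝ) ≤ C' := le_max_right _ _
  have h2' : ∀ ε > (0:ℝ), ∀ x, nw (L ε x - L 0 x) ≤ C' * ε * ns x := fun ε hε x =>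
    (h2 ε hε x).trans (mul_le_mul_of_nonneg_right
      (mul_le_mul_of_nonneg_right (le_max_left C 0) hε.le) (apply_nonneg ns x))
  -- fixed point identities
  have hid : ∀ ε > (0:ℝ), ε⁻¹ • (h 0 - h ε)
      = L ε (ε⁻¹ • (h 0 - h ε)) + ε⁻¹ • (L 0 (h 0) - L ε (h 0)) := by
    intro ε hε
    rw [map_smul, ← smul_add, map_sub]
    congr 1
    rw [(hfix ε hε.le).1, h00]
    abel
  have hidh : hhat = L 0 hhat + Lhat (h 0) := by
    rw [← hhat_def]; abel
  -- mass facts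
  have hmassv : ∀ ε > (0:ℝ), mass (ε⁻¹ • (h 0 - h ε)) = 0 := by
    intro ε hε
    rw [map_smul, map_sub, hmass0, (hfix ε hε.le).2, sub_self, smul_zero]
  have hmassgε : ∀ ε > (0:ℝ), mass (ε⁻¹ • (L 0 (h 0) - L ε (h 0))) = 0 := by
    intro ε hε
    rw [map_smul, map_sub, hmarkov 0 le_rfl, hmarkov ε hε.le, sub_self, smul_zero]
  -- geometric sum bound
  have hgeom : ∀ k : ℕ, ∑ j ∈ Finset.range k, ρ ^ j ≤ (1 - ρ)⁻¹ := by
    intro k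
    rw [geom_sum_eq hρ1.ne k, div_le_iff_of_neg (by linarith : ρ - 1 < 0)]
    have he : (1 - ρ)⁻¹ * (ρ - 1) = -1 := by
      field_simp
      ring
    rw [he]
    nlinarith [pow_nonneg hρ0.le k]
  have hsum_g : ∀ ε ≥ (0:ℝ), ∀ k : ℕ,
      ∑ j ∈ Finset.range k, ns ((L ε ^ j) (Lhat (h 0)))
        ≤ C1 * (1 - ρ)⁻¹ * ns (Lhat (h 0)) := by
    intro ε hε k
    calc ∑ j ∈ Finset.range k, ns ((L ε ^ j) (Lhat (h 0)))
        ≤ ∑ j ∈ Finset.range k, C1 * ρ ^ j * ns (Lhat (h 0)) :=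
          Finset.sum_le_sum (fun j _ => h3 ε hε j _ hmassg)
      _ = C1 * ns (Lhat (h 0)) * ∑ j ∈ Finset.range k, ρ ^ j := by
          rw [Finset.mul_sum]; exact Finset.sum_congr rfl (fun j _ => by ring)
      _ ≤ C1 * ns (Lhat (h 0)) * (1 - ρ)⁻¹ :=
          mul_le_mul_of_nonneg_left (hgeom k)
            (mul_nonneg hC1.le (apply_nonneg ns _))
      _ = C1 * (1 - ρ)⁻¹ * ns (Lhat (h 0)) := by ring
  -- per-term bound in the sum
  have hterm : ∀ ε > (0:ℝ), ∀ k : ℕ,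
      nw ((L ε ^ k) (ε⁻¹ • (L 0 (h 0) - L ε (h 0))) - (L 0 ^ k) (Lhat (h 0)))
        ≤ K' * ns (ε⁻¹ • (L 0 (h 0) - L ε (h 0)) - Lhat (h 0))
          + K' * (C' * ε) * (C1 * (1 - ρ)⁻¹ * ns (Lhat (h 0))) := by
    intro ε hε k
    have hsplit : (L ε ^ k) (ε⁻¹ • (L 0 (h 0) - L ε (h 0))) - (L 0 ^ k) (Lhat (h 0))
        = (L ε ^ k) (ε⁻¹ • (L 0 (h 0) - L ε (h 0)) - Lhat (h 0))
          + ((L ε ^ k) (Lhat (h 0)) - (L 0 ^ k) (Lhat (h 0))) := by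
      rw [map_sub]; abel
    have t1 : nw ((L ε ^ k) (ε⁻¹ • (L 0 (h 0) - L ε (h 0)) - Lhat (h 0)))
        ≤ K' * ns (ε⁻¹ • (L 0 (h 0) - L ε (h 0)) - Lhat (h 0)) :=
      (h1' ε hε.le k _).trans
        (mul_le_mul_of_nonneg_left (hws _) hK'0)
    have t2 : nw ((L ε ^ k) (Lhat (h 0)) - (L 0 ^ k) (Lhat (h 0)))
        ≤ K' * (C' * ε) * (C1 * (1 - ρ)⁻¹ * ns (Lhat (h 0))) := by
      refine (aux_tele nw ns (L ε) (L 0) K' (C' * ε) hK'0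
        (h1' 0 le_rfl) (fun x => h2' ε hε x) k (Lhat (h 0))).trans ?_
      have hKC : 0 ≤ K' * (C' * ε) := mul_nonneg hK'0 (mul_nonneg hC'0 hε.le)
      exact mul_le_mul_of_nonneg_left (hsum_g ε hε.le k) hKC
    refine le_trans ?_ (add_le_add t1 t2)
    rw [hsplit]
    exact map_add_le_add nw _ _
  -- the key estimate for every n
  have key : ∀ ε > (0:ℝ), ∀ n : ℕ,
      nw (ε⁻¹ • (h 0 - h ε) - hhat)
        ≤ C1 * ρ ^ n * (ns (ε⁻¹ • (h 0 - h ε)) + ns hhat)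
          + (n : ℝ) * (K' * ns (ε⁻¹ • (L 0 (h 0) - L ε (h 0)) - Lhat (h 0))
            + K' * (C' * ε) * (C1 * (1 - ρ)⁻¹ * ns (Lhat (h 0)))) := by
    intro ε hε n
    have idv := aux_iterate (L ε) _ _ (hid ε hε) n
    have idh := aux_iterate (L 0) hhat (Lhat (h 0)) hidh n
    have hsplit : ε⁻¹ • (h 0 - h ε) - hhat
        = ((L ε ^ n) (ε⁻¹ • (h 0 - h ε)) - (L 0 ^ n) hhat)
          + ∑ k ∈ Finset.range n,
            ((L ε ^ k) (ε⁻¹ • (L 0 (h 0) - L ε (h 0))) - (L 0 ^ k) (Lhat (h 0))) := by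
      conv_lhs => rw [idv, idh]
      rw [Finset.sum_sub_distrib]
      abel
    have tA : nw ((L ε ^ n) (ε⁻¹ • (h 0 - h ε))) ≤ C1 * ρ ^ n * ns (ε⁻¹ • (h 0 - h ε)) :=
      (hws _).trans (h3 ε hε.le n _ (hmassv ε hε))
    have tB : nw ((L 0 ^ n) hhat) ≤ C1 * ρ ^ n * ns hhat :=
      (hws _).trans (h3 0 le_rfl n hhat hhat0)
    have tC : nw (∑ k ∈ Finset.range n,
        ((L ε ^ k) (ε⁻¹ • (L 0 (h 0) - L ε (h 0))) - (L 0 ^ k) (Lhat (h 0))))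
        ≤ (n : ℝ) * (K' * ns (ε⁻¹ • (L 0 (h 0) - L ε (h 0)) - Lhat (h 0))
            + K' * (C' * ε) * (C1 * (1 - ρ)⁻¹ * ns (Lhat (h 0)))) := by
      refine (aux_seminorm_sum_le nw _ _).trans ?_
      refine (Finset.sum_le_sum (fun k _ => hterm ε hε k)).trans ?_
      rw [Finset.sum_const, Finset.card_range, nsmul_eq_mul]
    calc nw (ε⁻¹ • (h 0 - h ε) - hhat)
        ≤ nw ((L ε ^ n) (ε⁻¹ • (h 0 - h ε)) - (L 0 ^ n) hhat)
          + nw (∑ k ∈ Finset.range n,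
            ((L ε ^ k) (ε⁻¹ • (L 0 (h 0) - L ε (h 0))) - (L 0 ^ k) (Lhat (h 0)))) := by
          rw [hsplit]; exact map_add_le_add nw _ _
      _ ≤ (nw ((L ε ^ n) (ε⁻¹ • (h 0 - h ε))) + nw ((L 0 ^ n) hhat))
          + (n : ℝ) * (K' * ns (ε⁻¹ • (L 0 (h 0) - L ε (h 0)) - Lhat (h 0))
            + K' * (C' * ε) * (C1 * (1 - ρ)⁻¹ * ns (Lhat (h 0)))) := by
          refine add_le_add ?_ tC
          have : (L ε ^ n) (ε⁻¹ • (h 0 - h ε)) - (L 0 ^ n) hhat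
              = (L ε ^ n) (ε⁻¹ • (h 0 - h ε)) + (-(L 0 ^ n) hhat) := by abel
          rw [this]
          refine (map_add_le_add nw _ _).trans ?_
          rw [map_neg_eq_map]
      _ ≤ _ := by
          refine add_le_add ?_ le_rfl
          have := add_le_add tA tB
          linarith [this]
  -- uniform bound on ns of the response quotient, for small ε
  obtain ⟨n0, hn0⟩ : ∃ n0 : ℕ, C1 * ρ ^ n0 ≤ 1 / 2 := by
    obtain ⟨n0, hn0⟩ := exists_pow_lt_of_lt_one
      (show (0:ℝ) < 1 / (2 * C1) by positivity) hρ1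
    refine ⟨n0, ?_⟩
    have := mul_lt_mul_of_pos_left hn0 hC1
    have he : C1 * (1 / (2 * C1)) = 1 / 2 := by field_simp
    linarith [he ▸ this]
  set M : ℝ := 2 * ((n0 : ℝ) * (C1 * (ns (Lhat (h 0)) + 1))) with hMdef
  have hM : ∀ ε > (0:ℝ), ns (ε⁻¹ • (L 0 (h 0) - L ε (h 0)) - Lhat (h 0)) ≤ 1 →
      ns (ε⁻¹ • (h 0 - h ε)) ≤ M := by
    intro ε hε hdd
    have idv := aux_iterate (L ε) _ _ (hid ε hε) n0
    have hnsgε : ns (ε⁻¹ • (L 0 (h 0) - L ε (h 0))) ≤ ns (Lhat (h 0)) + 1 := by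
      have := map_add_le_add ns (ε⁻¹ • (L 0 (h 0) - L ε (h 0)) - Lhat (h 0)) (Lhat (h 0))
      rw [sub_add_cancel] at this
      linarith
    have h5 : ns (ε⁻¹ • (h 0 - h ε)) ≤ ns ((L ε ^ n0) (ε⁻¹ • (h 0 - h ε)))
        + ∑ k ∈ Finset.range n0, ns ((L ε ^ k) (ε⁻¹ • (L 0 (h 0) - L ε (h 0)))) := by
      conv_lhs => rw [idv]
      exact (map_add_le_add ns _ _).trans
        (add_le_add_right (aux_seminorm_sum_le ns _ _) _)
    have hA : ns ((L ε ^ n0) (ε⁻¹ • (h 0 - h ε)))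
        ≤ (1 / 2) * ns (ε⁻¹ • (h 0 - h ε)) := by
      refine (h3 ε hε.le n0 _ (hmassv ε hε)).trans ?_
      exact mul_le_mul_of_nonneg_right hn0 (apply_nonneg ns _)
    have hB : ∑ k ∈ Finset.range n0, ns ((L ε ^ k) (ε⁻¹ • (L 0 (h 0) - L ε (h 0))))
        ≤ (n0 : ℝ) * (C1 * (ns (Lhat (h 0)) + 1)) := by
      have hb : ∀ k ∈ Finset.range n0, ns ((L ε ^ k) (ε⁻¹ • (L 0 (h 0) - L ε (h 0))))
          ≤ C1 * (ns (Lhat (h 0)) + 1) := by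
        intro k _
        refine (h3 ε hε.le k _ (hmassgε ε hε)).trans ?_
        have hρk : ρ ^ k ≤ 1 := pow_le_one₀ hρ0.le hρ1.le
        have h0' : 0 ≤ ns (ε⁻¹ • (L 0 (h 0) - L ε (h 0))) := apply_nonneg _ _
        nlinarith [mul_nonneg (sub_nonneg.mpr hρk) h0', hC1.le, hnsgε,
          apply_nonneg ns (Lhat (h 0))]
      calc ∑ k ∈ Finset.range n0, ns ((L ε ^ k) (ε⁻¹ • (L 0 (h 0) - L ε (h 0))))
          ≤ ∑ _k ∈ Finset.range n0, (C1 * (ns (Lhat (h 0)) + 1)) := Finset.sum_le_sum hb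
        _ = (n0 : ℝ) * (C1 * (ns (Lhat (h 0)) + 1)) := by
            rw [Finset.sum_const, Finset.card_range, nsmul_eq_mul]
    rw [hMdef]
    linarith
  -- conclusion
  rw [NormedAddCommGroup.tendsto_nhds_zero]
  intro δ hδ
  have hA0 : (0:ℝ) ≤ M + ns hhat := by
    have : (0:ℝ) ≤ M := by
      rw [hMdef]
      have := apply_nonneg ns (Lhat (h 0))
      positivity
    linarith [apply_nonneg ns hhat]
  obtain ⟨n, hn⟩ : ∃ n : ℕ, C1 * ρ ^ n * (M + ns hhat) < δ / 2 := by
    have hten : Tendsto (fun n : ℕ => C1 * ρ ^ n * (M + ns hhat)) atTop (nhds 0) := by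
      have := ((tendsto_pow_atTop_nhds_zero_of_lt_one hρ0.le hρ1).const_mul C1).mul_const
        (M + ns hhat)
      simpa using this
    exact (hten.eventually_lt_const (by linarith : (0:ℝ) < δ / 2)).exists
  set Q : ℝ := (n : ℝ) * (K' * C' * (C1 * (1 - ρ)⁻¹ * ns (Lhat (h 0)))) with hQdef
  have hQ0 : 0 ≤ Q := by
    rw [hQdef]
    have h1n : (0:ℝ) ≤ (n:ℝ) := Nat.cast_nonneg n
    have h2n : (0:ℝ) ≤ (1 - ρ)⁻¹ := by positivity
    have := apply_nonneg ns (Lhat (h 0))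
    positivity
  have hb2pos : (0:ℝ) < δ / (4 * ((n : ℝ) * K' + 1)) := by
    have hnK : (0:ℝ) ≤ (n : ℝ) * K' := mul_nonneg (Nat.cast_nonneg n) hK'0
    apply div_pos hδ; linarith
  have hb3pos : (0:ℝ) < δ / (4 * (Q + 1)) := by
    apply div_pos hδ; linarith
  have E2 : ∀ᶠ ε in nhdsWithin (0:ℝ) (Set.Ioi 0),
      ns (ε⁻¹ • (L 0 (h 0) - L ε (h 0)) - Lhat (h 0))
        < min 1 (δ / (4 * ((n : ℝ) * K' + 1))) :=
    h4.eventually_lt_const (lt_min one_pos hb2pos)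
  have E3 : ∀ᶠ ε in nhdsWithin (0:ℝ) (Set.Ioi 0), ε < δ / (4 * (Q + 1)) := by
    have hid' : Tendsto (fun ε : ℝ => ε) (nhdsWithin 0 (Set.Ioi 0)) (nhds 0) :=
      tendsto_id.mono_left nhdsWithin_le_nhds
    exact hid'.eventually_lt_const hb3pos
  have E1 : ∀ᶠ ε in nhdsWithin (0:ℝ) (Set.Ioi 0), ε ∈ Set.Ioi (0:ℝ) :=
    self_mem_nhdsWithin
  filter_upwards [E1, E2, E3] with ε hε1 hε2 hε3
  have hεpos : (0:ℝ) < ε := hε1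
  rw [Real.norm_of_nonneg (apply_nonneg nw _)]
  have hb := key ε hεpos n
  have hMv : ns (ε⁻¹ • (h 0 - h ε)) ≤ M :=
    hM ε hεpos ((lt_of_lt_of_le hε2 (min_le_left _ _)).le)
  have hρn : (0:ℝ) ≤ C1 * ρ ^ n := by positivity
  have fact1 : C1 * ρ ^ n * (ns (ε⁻¹ • (h 0 - h ε)) + ns hhat) < δ / 2 := by
    have : C1 * ρ ^ n * (ns (ε⁻¹ • (h 0 - h ε)) + ns hhat)
        ≤ C1 * ρ ^ n * (M + ns hhat) :=
      mul_le_mul_of_nonneg_left (add_le_add_left hMv _) hρn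
    linarith
  have hdd2 : ns (ε⁻¹ • (L 0 (h 0) - L ε (h 0)) - Lhat (h 0))
      ≤ δ / (4 * ((n : ℝ) * K' + 1)) :=
    (lt_of_lt_of_le hε2 (min_le_right _ _)).le
  have hnK : (0:ℝ) ≤ (n : ℝ) * K' := mul_nonneg (Nat.cast_nonneg n) hK'0
  have fact2 : (n : ℝ) * (K' * ns (ε⁻¹ • (L 0 (h 0) - L ε (h 0)) - Lhat (h 0))) < δ / 4 := by
    have hne : (n : ℝ) * K' + 1 ≠ 0 := by linarith
    have he : ((n : ℝ) * K' + 1) * (δ / (4 * ((n : ℝ) * K' + 1))) = δ / 4 := by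
      field_simp
    calc (n : ℝ) * (K' * ns (ε⁻¹ • (L 0 (h 0) - L ε (h 0)) - Lhat (h 0)))
        = ((n : ℝ) * K') * ns (ε⁻¹ • (L 0 (h 0) - L ε (h 0)) - Lhat (h 0)) := by ring
      _ ≤ ((n : ℝ) * K') * (δ / (4 * ((n : ℝ) * K' + 1))) :=
          mul_le_mul_of_nonneg_left hdd2 hnK
      _ < ((n : ℝ) * K' + 1) * (δ / (4 * ((n : ℝ) * K' + 1))) :=
          mul_lt_mul_of_pos_right (by linarith : (n : ℝ) * K' < (n : ℝ) * K' + 1) hb2pos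
      _ = δ / 4 := he
  have fact3 : (n : ℝ) * (K' * (C' * ε) * (C1 * (1 - ρ)⁻¹ * ns (Lhat (h 0)))) < δ / 4 := by
    have he : (Q + 1) * (δ / (4 * (Q + 1))) = δ / 4 := by
      have : Q + 1 ≠ 0 := by linarith
      field_simp
    calc (n : ℝ) * (K' * (C' * ε) * (C1 * (1 - ρ)⁻¹ * ns (Lhat (h 0))))
        = ε * Q := by rw [hQdef]; ring
      _ ≤ ε * (Q + 1) := mul_le_mul_of_nonneg_left (by linarith : Q ≤ Q + 1) hεpos.le
      _ < (δ / (4 * (Q + 1))) * (Q + 1) :=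
          mul_lt_mul_of_pos_right hε3 (by linarith)
      _ = δ / 4 := by rw [← he]; ring
  have hdist : (n : ℝ) * (K' * ns (ε⁻¹ • (L 0 (h 0) - L ε (h 0)) - Lhat (h 0))
      + K' * (C' * ε) * (C1 * (1 - ρ)⁻¹ * ns (Lhat (h 0))))
      = (n : ℝ) * (K' * ns (ε⁻¹ • (L 0 (h 0) - L ε (h 0)) - Lhat (h 0)))
        + (n : ℝ) * (K' * (C' * ε) * (C1 * (1 - ρ)⁻¹ * ns (Lhat (h 0)))) := by ring
  rw [hdist] at hb
  linarith
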